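/- Let T₁, T₂ be a nice pair of non-crossing spanning trees and let A be a very good side of a chord e of T₁ with respect to T₂ (A contains no chord of T₂ and the degree of A in T₂ is at most k_A). If P is an internal border path of A, then P is incident to at least 1 chord of T₂, and at most one internal border path of A is incident to 2 chords of T₂. -/
import Mathlib


open Finset

noncomputable section
attribute [local instance] Classical.propDecidable

/-- The successor of `i` in the cyclic order on `Fin n`. -/
def nextIdx {n : ℕ} (i : Fin n) : Fin n := ⟨(i.val + 1) % n, Nat.mod_lt _ i.pos⟩

/-- `x` lies strictly between `a` and `b` in the cyclic order on `Fin n`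
(going forwards from `a` to `b`). -/
def CBtw {n : ℕ} (a x b : Fin n) : Prop :=
  0 < (x - a).val ∧ (x - a).val < (b - a).val

/-- Endpoints `a,b` and `c,d` interleave in the cyclic order:
exactly one of `c`, `d` lies strictly between `a` and `b`. -/
def CrossPair {n : ℕ} (a b c d : Fin n) : Prop :=
  Xor' (CBtw a c b) (CBtw a d b)

/-- Two chords of the convex polygon on `n` points (labeled in cyclic order)
cross in their interiors; combinatorially their endpoints interleave. -/
def Crosses {n : ℕ} (e f : Sym2 (Fin n)) : Prop :=
  ∃ a b c d : Fin n, e = s(a, b) ∧ f = s(c, d) ∧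
    a ≠ b ∧ a ≠ c ∧ a ≠ d ∧ b ≠ c ∧ b ≠ d ∧ c ≠ d ∧ CrossPair a b c d

/-- A border edge joins two consecutive points of the convex hull. -/
def IsBorderEdge {n : ℕ} (e : Sym2 (Fin n)) : Prop :=
  ∃ i : Fin n, e = s(i, nextIdx i)

/-- `T` is a non-crossing spanning tree on the `n` points (in convex position,
labeled cyclically by `Fin n`): loopless, `n - 1` edges, connected, and no two
edges cross. -/
def IsNCST (n : ℕ) (T : Finset (Sym2 (Fin n))) : Prop :=
  (∀ e ∈ T, ¬ e.IsDiag) ∧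
  T.card = n - 1 ∧
  (SimpleGraph.fromEdgeSet (↑T : Set (Sym2 (Fin n)))).Connected ∧
  ∀ e ∈ T, ∀ f ∈ T, ¬ Crosses e f

/-- One flip: exactly one edge is removed and one edge is added. -/
def FlipStep {n : ℕ} (T T' : Finset (Sym2 (Fin n))) : Prop :=
  (T \ T').card = 1 ∧ (T' \ T).card = 1

/-- A flip sequence: consecutive non-crossing spanning trees differing by one flip. -/
def IsFlipSeq (n : ℕ) (L : List (Finset (Sym2 (Fin n)))) : Prop :=
  (∀ T ∈ L, IsNCST n T) ∧ L.Chain' FlipStep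

/-- There is a flip sequence of length `ℓ` from `T₁` to `T₂`. -/
def HasFlipSeq (n : ℕ) (T₁ T₂ : Finset (Sym2 (Fin n))) (ℓ : ℕ) : Prop :=
  ∃ L : List (Finset (Sym2 (Fin n))), IsFlipSeq n L ∧ L.length = ℓ + 1 ∧
    L.head? = some T₁ ∧ L.getLast? = some T₂

/-- The side of the chord from `a` to `b`: the two endpoints together with all
points strictly between them in the cyclic order. -/
def sideOf {n : ℕ} (a b : Fin n) : Finset (Fin n) :=
  Finset.univ.filter (fun x => x = a ∨ x = b ∨ CBtw a x b)

/-- Holes of `T` (pairs of consecutive points not joined by an edge of `T`)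
with both endpoints in `A`, indexed by their first point. -/
def holesIn (n : ℕ) (T : Finset (Sym2 (Fin n))) (A : Finset (Fin n)) : Finset (Fin n) :=
  Finset.univ.filter (fun i => s(i, nextIdx i) ∉ T ∧ i ∈ A ∧ nextIdx i ∈ A)

/-- Degree of the side `sideOf a b` in `T'`: the number of endpoints (counted
with multiplicity over the chords of `T'`) lying inside the side. An endpoint
`v` of a chord `vw` is inside the side if `v` belongs to it and either `v` is
not an endpoint of the defining chord `ab` or both `v, w` are in the side. -/
def sideDegree (n : ℕ) (a b : Fin n) (T' : Finset (Sym2 (Fin n))) : ℕ :=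
  ((Finset.univ : Finset (Fin n × Fin n)).filter
    (fun p => s(p.1, p.2) ∈ T' ∧ ¬ IsBorderEdge s(p.1, p.2) ∧
      p.1 ∈ sideOf a b ∧ ((p.1 ≠ a ∧ p.1 ≠ b) ∨ p.2 ∈ sideOf a b))).card

/-- A nice pair of trees: the same border edges, and no common chord. -/
def NicePair (n : ℕ) (T₁ T₂ : Finset (Sym2 (Fin n))) : Prop :=
  IsNCST n T₁ ∧ IsNCST n T₂ ∧
  (∀ e, IsBorderEdge e → (e ∈ T₁ ↔ e ∈ T₂)) ∧
  (∀ e ∈ T₁, e ∈ T₂ → IsBorderEdge e)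

/-- The predecessor of `i` in the cyclic order on `Fin n`. -/
def prevIdx {n : ℕ} (i : Fin n) : Fin n :=
  ⟨(i.val + (n - 1)) % n, Nat.mod_lt _ i.pos⟩

/-- The point `t` steps after `i` in the cyclic order. -/
def stepIdx {n : ℕ} (i : Fin n) (t : ℕ) : Fin n :=
  ⟨(i.val + t) % n, Nat.mod_lt _ i.pos⟩

/-- The points `i, i+1, …, i+m` form a (maximal) border path of `T`: all the
`m` border edges between them are in `T`, and the border edges just before `i`
and just after `i + m` are not. -/
def IsBorderPathFrom (n : ℕ) (T : Finset (Sym2 (Fin n))) (i : Fin n) (m : ℕ) :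
    Prop :=
  (∀ t < m, s(stepIdx i t, stepIdx i (t + 1)) ∈ T) ∧
  s(stepIdx i m, stepIdx i (m + 1)) ∉ T ∧
  s(prevIdx i, i) ∉ T

/-- An internal border path of the side `sideOf a b`: a border path all of
whose points lie in the side and which contains no endpoint of the chord
`ab`. -/
def InternalBorderPath (n : ℕ) (T : Finset (Sym2 (Fin n))) (a b : Fin n)
    (i : Fin n) (m : ℕ) : Prop :=
  IsBorderPathFrom n T i m ∧
  ∀ t ≤ m, stepIdx i t ∈ sideOf a b ∧ stepIdx i t ≠ a ∧ stepIdx i t ≠ b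

/-- The number of chords of `T'` incident to the border path starting at `i`
of length `m` (i.e. having an endpoint on the path). -/
def incChords (n : ℕ) (T' : Finset (Sym2 (Fin n))) (i : Fin n) (m : ℕ) : ℕ :=
  (T'.filter (fun e => ¬ IsBorderEdge e ∧ ∃ t ≤ m, stepIdx i t ∈ e)).card

/-- `sideOf a b` is a good side of the chord `ab ∈ T` w.r.t. `T'`: it contains
no chord of `T'`. -/
def GoodSide (n : ℕ) (T T' : Finset (Sym2 (Fin n))) (a b : Fin n) : Prop :=
  s(a, b) ∈ T ∧ ¬ IsBorderEdge s(a, b) ∧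
  ∀ e ∈ T', ¬ IsBorderEdge e → ¬ (∀ v ∈ e, v ∈ sideOf a b)

/-- A very good side: a good side whose degree in `T'` is at most its number
of holes. -/
def VeryGoodSide (n : ℕ) (T T' : Finset (Sym2 (Fin n))) (a b : Fin n) : Prop :=
  GoodSide n T T' a b ∧
  sideDegree n a b T' ≤ (holesIn n T (sideOf a b)).card


/-! ### Auxiliary lemmas -/

lemma stepIdx_zero {n : ℕ} (i : Fin n) : stepIdx i 0 = i := by
  apply Fin.ext; simp [stepIdx, Nat.mod_eq_of_lt i.isLt]

lemma stepIdx_succ {n : ℕ} (i : Fin n) (t : ℕ) :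
    stepIdx i (t + 1) = nextIdx (stepIdx i t) := by
  apply Fin.ext
  simp only [stepIdx, nextIdx]
  rw [Nat.mod_add_mod, Nat.add_assoc]

lemma stepIdx_add {n : ℕ} (i : Fin n) (s t : ℕ) :
    stepIdx (stepIdx i s) t = stepIdx i (s + t) := by
  apply Fin.ext
  simp only [stepIdx]
  rw [Nat.mod_add_mod, Nat.add_assoc]

lemma prevIdx_stepIdx {n : ℕ} (i : Fin n) (t : ℕ) :
    prevIdx (stepIdx i (t + 1)) = stepIdx i t := by
  have hn := i.pos
  apply Fin.ext
  simp only [prevIdx, stepIdx]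
  rw [Nat.mod_add_mod]
  have h : i.val + (t + 1) + (n - 1) = (i.val + t) + n := by omega
  rw [h, Nat.add_mod_right]

lemma nextIdx_eq_stepIdx_one {n : ℕ} (x : Fin n) : nextIdx x = stepIdx x 1 := rfl

lemma prevIdx_nextIdx {n : ℕ} (x : Fin n) : prevIdx (nextIdx x) = x := by
  rw [nextIdx_eq_stepIdx_one, show (1:ℕ) = 0 + 1 from rfl, prevIdx_stepIdx, stepIdx_zero]

lemma nextIdx_prevIdx {n : ℕ} (x : Fin n) : nextIdx (prevIdx x) = x := by
  have hn := x.pos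
  apply Fin.ext
  simp only [nextIdx, prevIdx]
  rw [Nat.mod_add_mod]
  have h : x.val + (n - 1) + 1 = x.val + n := by omega
  rw [h, Nat.add_mod_right, Nat.mod_eq_of_lt x.isLt]

lemma stepIdx_sub_val {n : ℕ} (a x : Fin n) : stepIdx a ((x - a).val) = x := by
  have hn := a.pos
  have ha := a.isLt
  have hx := x.isLt
  apply Fin.ext
  simp only [stepIdx, Fin.sub_def]
  rw [Nat.add_mod_mod]
  have h : a.val + (n - a.val + x.val) = x.val + n := by omega
  rw [h, Nat.add_mod_right, Nat.mod_eq_of_lt hx]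

lemma sub_val_stepIdx {n : ℕ} (a : Fin n) (q : ℕ) (hq : q < n) :
    ((stepIdx a q : Fin n) - a).val = q := by
  have ha := a.isLt
  simp only [stepIdx, Fin.sub_def]
  rw [Nat.add_mod_mod]
  have h : n - a.val + (a.val + q) = q + n := by omega
  rw [h, Nat.add_mod_right, Nat.mod_eq_of_lt hq]

lemma stepIdx_n {n : ℕ} (a : Fin n) : stepIdx a n = a := by
  apply Fin.ext
  simp only [stepIdx]
  rw [Nat.add_mod_right, Nat.mod_eq_of_lt a.isLt]

lemma sub_self_val {n : ℕ} (a : Fin n) : (a - a).val = 0 := by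
  have h := sub_val_stepIdx a 0 a.pos
  rwa [stepIdx_zero] at h

lemma mem_sideOf_iff {n : ℕ} (a b x : Fin n) :
    x ∈ sideOf a b ↔ (x - a).val ≤ (b - a).val := by
  simp only [sideOf, Finset.mem_filter, Finset.mem_univ, true_and]
  constructor
  · rintro (rfl | rfl | h)
    · rw [sub_self_val]; exact Nat.zero_le _
    · exact le_refl _
    · exact h.2.le
  · intro h
    rcases Nat.eq_zero_or_pos (x - a).val with h0 | h0
    · left
      have hx := stepIdx_sub_val a x
      rw [h0, stepIdx_zero] at hx
      exact hx.symm
    · rcases eq_or_lt_of_le h with he | hl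
      · right; left
        have hx := stepIdx_sub_val a x
        rw [he, stepIdx_sub_val a b] at hx
        exact hx.symm
      · right; right; exact ⟨h0, hl⟩

lemma stepIdx_props {n : ℕ} (a b : Fin n) (r : ℕ) (h1 : 1 ≤ r) (h2 : r < (b - a).val) :
    stepIdx a r ∈ sideOf a b ∧ stepIdx a r ≠ a ∧ stepIdx a r ≠ b := by
  have hrn : r < n := lt_trans h2 (b - a).isLt
  have hP := sub_val_stepIdx a r hrn
  refine ⟨(mem_sideOf_iff a b _).mpr (by rw [hP]; omega), ?_, ?_⟩
  · intro h
    rw [h, sub_self_val] at hP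
    omega
  · intro h
    rw [h] at hP
    omega

/-- Every internal border path of a side is incident to at least one chord of
the other tree of a nice pair. -/
lemma internal_path_one_chord (n : ℕ) (T₁ T₂ : Finset (Sym2 (Fin n)))
    (hnice : NicePair n T₁ T₂) (a b : Fin n) (i : Fin n) (m : ℕ)
    (hP : InternalBorderPath n T₁ a b i m) : 1 ≤ incChords n T₂ i m := by
  by_contra h
  push_neg at h
  have hzero : T₂.filter (fun e => ¬ IsBorderEdge e ∧ ∃ t ≤ m, stepIdx i t ∈ e) = ∅ :=
    Finset.card_eq_zero.mp (by unfold incChords at h; omega)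
  have hborder : ∀ e ∈ T₂, (∃ t ≤ m, stepIdx i t ∈ e) → IsBorderEdge e := by
    intro e he hex
    by_contra hb
    have hmem : e ∈ T₂.filter (fun e => ¬ IsBorderEdge e ∧ ∃ t ≤ m, stepIdx i t ∈ e) :=
      Finset.mem_filter.mpr ⟨he, hb, hex⟩
    rw [hzero] at hmem
    exact absurd hmem (Finset.notMem_empty e)
  have hiff := hnice.2.2.1
  set S : Set (Fin n) := {x | ∃ t ≤ m, x = stepIdx i t} with hS
  have hclosed : ∀ u v : Fin n, u ∈ S → s(u, v) ∈ T₂ → v ∈ S := by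
    intro u v hu he
    obtain ⟨t, ht, rfl⟩ := hu
    have hbe : IsBorderEdge s(stepIdx i t, v) :=
      hborder _ he ⟨t, ht, Sym2.mem_mk_left _ _⟩
    obtain ⟨j, hj⟩ := hbe
    rw [Sym2.eq_iff] at hj
    rcases hj with ⟨hu1, hv1⟩ | ⟨hu2, hv2⟩
    · -- v = nextIdx (stepIdx i t) = stepIdx i (t+1)
      have hv : v = stepIdx i (t + 1) := by rw [hv1, ← hu1, ← stepIdx_succ]
      rcases lt_or_eq_of_le ht with htm | htm
      · exact ⟨t + 1, htm, hv⟩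
      · exfalso
        subst htm
        have heT : s(stepIdx i t, stepIdx i (t + 1)) ∈ T₂ := by rwa [← hv]
        have hbe2 : IsBorderEdge s(stepIdx i t, stepIdx i (t + 1)) := by
          rw [stepIdx_succ]; exact ⟨stepIdx i t, rfl⟩
        exact hP.1.2.1 ((hiff _ hbe2).mpr heT)
    · -- u = nextIdx j, v = j = prevIdx u
      have hv : v = prevIdx (stepIdx i t) := by
        rw [hv2, ← prevIdx_nextIdx j, ← hu2]
      rcases Nat.eq_zero_or_pos t with ht0 | ht0
      · exfalso
        subst ht0
        rw [stepIdx_zero] at hv he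
        have heT : s(prevIdx i, i) ∈ T₂ := by
          rw [Sym2.eq_swap]; rwa [← hv]
        have hbe2 : IsBorderEdge s(prevIdx i, i) :=
          ⟨prevIdx i, by rw [nextIdx_prevIdx]⟩
        exact hP.1.2.2 ((hiff _ hbe2).mpr heT)
      · obtain ⟨t', rfl⟩ : ∃ t', t = t' + 1 := ⟨t - 1, by omega⟩
        rw [prevIdx_stepIdx] at hv
        exact ⟨t', by omega, hv⟩
  have hwalk : ∀ (u v : Fin n)
      (_ : (SimpleGraph.fromEdgeSet (↑T₂ : Set (Sym2 (Fin n)))).Walk u v), u ∈ S → v ∈ S := by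
    intro u v w
    induction w with
    | nil => exact id
    | cons hadj _ ih =>
      intro hu
      rw [SimpleGraph.fromEdgeSet_adj] at hadj
      exact ih (hclosed _ _ hu (Finset.mem_coe.mp hadj.1))
  obtain ⟨w⟩ := hnice.2.1.2.2.1.preconnected i a
  obtain ⟨t, ht, hta⟩ := hwalk i a w ⟨0, Nat.zero_le _, (stepIdx_zero i).symm⟩
  exact (hP.2 t ht).2.1 hta.symm


/-- An internal border path sits at positions `s, s+1, …, s+m` strictly
between the endpoints of the chord. -/
lemma internal_path_positions (n : ℕ) (T₁ : Finset (Sym2 (Fin n))) (a b i : Fin n) (m : ℕ)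
    (hP : InternalBorderPath n T₁ a b i m) :
    1 ≤ (i - a).val ∧ (i - a).val + m < (b - a).val ∧
      ∀ t ≤ m, stepIdx i t = stepIdx a ((i - a).val + t) := by
  have hd : (b - a).val < n := (b - a).isLt
  have hi0 : stepIdx a ((i - a).val) = i := stepIdx_sub_val a i
  have hb0 : stepIdx a ((b - a).val) = b := stepIdx_sub_val a b
  have key : ∀ t ≤ m, stepIdx i t = stepIdx a ((i - a).val + t) ∧
      (i - a).val + t < (b - a).val := by
    intro t
    induction t with
    | zero =>
      intro _
      have hi := hP.2 0 (Nat.zero_le _)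
      rw [stepIdx_zero] at hi
      refine ⟨by rw [stepIdx_zero, Nat.add_zero, hi0], ?_⟩
      have hle : (i - a).val ≤ (b - a).val := (mem_sideOf_iff a b i).mp hi.1
      rcases eq_or_lt_of_le hle with he | h
      · exact absurd (by rw [← hi0, he, hb0]) hi.2.2
      · omega
    | succ t ih =>
      intro ht
      obtain ⟨ih1, ih2⟩ := ih (Nat.le_of_succ_le ht)
      have heq : stepIdx i (t + 1) = stepIdx a ((i - a).val + (t + 1)) := by
        rw [stepIdx_succ, ih1, ← stepIdx_succ, ← Nat.add_assoc]
      refine ⟨heq, ?_⟩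
      have hi := hP.2 (t + 1) ht
      rw [heq] at hi
      have hlt_n : (i - a).val + (t + 1) < n := by omega
      have hle : (i - a).val + (t + 1) ≤ (b - a).val := by
        have hm := (mem_sideOf_iff a b _).mp hi.1
        rwa [sub_val_stepIdx a _ hlt_n] at hm
      rcases eq_or_lt_of_le hle with he | h
      · exact absurd (by rw [he, hb0]) hi.2.2
      · exact h
  refine ⟨?_, by have := (key m le_rfl).2; omega, fun t ht => (key t ht).1⟩
  by_contra hcon
  push_neg at hcon
  have hs0 : (i - a).val = 0 := by omega
  have : i = a := by rw [← hi0, hs0, stepIdx_zero]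
  exact (hP.2 0 (Nat.zero_le _)).2.1 (by rw [stepIdx_zero]; exact this)

/-- Between two consecutive holes strictly inside the side there is an
internal border path. -/
lemma build_internal_path (n : ℕ) (T₁ : Finset (Sym2 (Fin n))) (a b : Fin n)
    (q q' : ℕ) (hqq' : q < q') (hq'd : q' < (b - a).val)
    (hEq : s(stepIdx a q, stepIdx a (q+1)) ∉ T₁)
    (hEq' : s(stepIdx a q', stepIdx a (q'+1)) ∉ T₁)
    (hmid : ∀ r, q < r → r < q' → s(stepIdx a r, stepIdx a (r+1)) ∈ T₁) :
    InternalBorderPath n T₁ a b (stepIdx a (q+1)) (q' - q - 1) := by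
  refine ⟨⟨?_, ?_, ?_⟩, ?_⟩
  · intro t ht
    rw [stepIdx_add, stepIdx_add,
      show q + 1 + (t + 1) = (q + 1 + t) + 1 from by omega]
    exact hmid (q + 1 + t) (by omega) (by omega)
  · rw [stepIdx_add, stepIdx_add,
      show q + 1 + (q' - q - 1) = q' from by omega,
      show q + 1 + (q' - q - 1 + 1) = q' + 1 from by omega]
    exact hEq'
  · rw [prevIdx_stepIdx]
    exact hEq
  · intro t ht
    rw [stepIdx_add]
    exact stepIdx_props a b (q + 1 + t) (by omega) (by omega)

/-- The next element of `K` strictly after `q` (junk value `0` if none). -/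
noncomputable def nxtHole (K : Finset ℕ) (q : ℕ) : ℕ :=
  if h : (K.filter (fun r => q < r)).Nonempty then (K.filter (fun r => q < r)).min' h else 0

lemma nxtHole_spec (K : Finset ℕ) (q : ℕ) (h : (K.filter (fun r => q < r)).Nonempty) :
    nxtHole K q ∈ K ∧ q < nxtHole K q ∧ ∀ r ∈ K, q < r → nxtHole K q ≤ r := by
  unfold nxtHole
  rw [dif_pos h]
  have h1 := Finset.min'_mem _ h
  rw [Finset.mem_filter] at h1
  exact ⟨h1.1, h1.2, fun r hr hqr => Finset.min'_le _ _ (Finset.mem_filter.mpr ⟨hr, hqr⟩)⟩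

lemma nxtHole_eq (K : Finset ℕ) (q v : ℕ) (hv : v ∈ K) (hqv : q < v)
    (hmin : ∀ r ∈ K, q < r → v ≤ r) : nxtHole K q = v := by
  have hne : (K.filter (fun r => q < r)).Nonempty := ⟨v, Finset.mem_filter.mpr ⟨hv, hqv⟩⟩
  obtain ⟨h1, h2, h3⟩ := nxtHole_spec K q hne
  exact le_antisymm (h3 v hv hqv) (hmin _ h1 h2)

/-- Pick, for a chord incident to a border path, an ordered pair consisting of
an endpoint on the path and the other endpoint. -/
noncomputable def pickPair {n : ℕ} (j : Fin n) (m : ℕ) (e : Sym2 (Fin n)) : Fin n × Fin n :=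
  if h : ∃ t ≤ m, stepIdx j t ∈ e then
    (stepIdx j h.choose, Sym2.Mem.other h.choose_spec.2)
  else (j, j)

lemma pickPair_spec {n : ℕ} (j : Fin n) (m : ℕ) (e : Sym2 (Fin n))
    (h : ∃ t ≤ m, stepIdx j t ∈ e) :
    s((pickPair j m e).1, (pickPair j m e).2) = e ∧
      ∃ t ≤ m, (pickPair j m e).1 = stepIdx j t := by
  unfold pickPair
  rw [dif_pos h]
  exact ⟨Sym2.other_spec _, h.choose, h.choose_spec.1, rfl⟩

/-- In a very good side `A` of a nice pair: every internal border path of `A`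
is incident to at least one chord of `T₂`, and at most one internal border
path of `A` is incident to two chords of `T₂`. -/
theorem internal_border_paths_of_very_good_side (n : ℕ)
    (T₁ T₂ : Finset (Sym2 (Fin n))) (hnice : NicePair n T₁ T₂)
    (a b : Fin n) (hvg : VeryGoodSide n T₁ T₂ a b) :
    (∀ i m, InternalBorderPath n T₁ a b i m → 1 ≤ incChords n T₂ i m) ∧
    (∀ i m i' m', InternalBorderPath n T₁ a b i m →
      InternalBorderPath n T₁ a b i' m' →
      2 ≤ incChords n T₂ i m → 2 ≤ incChords n T₂ i' m' → i = i') := by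
  have part1 : ∀ i m, InternalBorderPath n T₁ a b i m → 1 ≤ incChords n T₂ i m :=
    fun i m hP => internal_path_one_chord n T₁ T₂ hnice a b i m hP
  refine ⟨part1, ?_⟩
  intro i m i' m' hP hP' h2 h2'
  by_contra hne
  have hn : 0 < n := a.pos
  have hdn : (b - a).val < n := (b - a).isLt
  set K : Finset ℕ := (Finset.range (b - a).val).filter
      (fun q => s(stepIdx a q, stepIdx a (q+1)) ∉ T₁) with hKdef
  have hKmem : ∀ q, q ∈ K ↔ q < (b - a).val ∧ s(stepIdx a q, stepIdx a (q+1)) ∉ T₁ := by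
    intro q
    rw [hKdef, Finset.mem_filter, Finset.mem_range]
  -- basic facts about an internal border path
  have hfacts : ∀ (j : Fin n) (l : ℕ), InternalBorderPath n T₁ a b j l →
      j = stepIdx a ((j-a).val) ∧ ((j-a).val - 1) ∈ K ∧ ((j-a).val + l) ∈ K ∧
      1 ≤ (j-a).val ∧ (j-a).val + l < (b-a).val ∧
      nxtHole K ((j-a).val - 1) = (j-a).val + l := by
    intro j l hPj
    obtain ⟨hs1, hsd, hpt⟩ := internal_path_positions n T₁ a b j l hPj
    have hj0 : j = stepIdx a ((j-a).val) := (stepIdx_sub_val a j).symm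
    have hEpath : ∀ t, t < l →
        s(stepIdx a ((j-a).val + t), stepIdx a ((j-a).val + t + 1)) ∈ T₁ := by
      intro t ht
      have he := hPj.1.1 t ht
      rwa [hpt t ht.le, hpt (t+1) ht,
        show (j-a).val + (t+1) = (j-a).val + t + 1 from by omega] at he
    have hhole1 : ((j-a).val - 1) ∈ K := by
      rw [hKmem]
      refine ⟨by omega, ?_⟩
      have hprev : prevIdx j = stepIdx a ((j-a).val - 1) := by
        conv_lhs => rw [hj0, show (j-a).val = ((j-a).val - 1) + 1 from by omega]
        rw [prevIdx_stepIdx]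
      rw [show (j-a).val - 1 + 1 = (j-a).val from by omega, ← hj0, ← hprev]
      exact hPj.1.2.2
    have hhole2 : ((j-a).val + l) ∈ K := by
      rw [hKmem]
      refine ⟨by omega, ?_⟩
      have h1 : stepIdx j l = stepIdx a ((j-a).val + l) := hpt l le_rfl
      have h2 : stepIdx j (l+1) = stepIdx a ((j-a).val + l + 1) := by
        rw [stepIdx_succ, h1, ← stepIdx_succ]
      rw [← h1, ← h2]
      exact hPj.1.2.1
    refine ⟨hj0, hhole1, hhole2, hs1, hsd, ?_⟩
    apply nxtHole_eq
    · exact hhole2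
    · omega
    · intro r hr hqr
      by_contra hlt
      push_neg at hlt
      rw [hKmem] at hr
      obtain ⟨t, rfl⟩ : ∃ t, r = (j-a).val + t := ⟨r - (j-a).val, by omega⟩
      exact hr.2 (hEpath t (by omega))
  obtain ⟨hi0, hq1K, hq1nK, hs1, hsd, hnxt1⟩ := hfacts i m hP
  obtain ⟨hi0', hq2K, hq2nK, hs1', hsd', hnxt1'⟩ := hfacts i' m' hP'
  have hKd : ∀ q ∈ K, q < (b - a).val := fun q hq => ((hKmem q).mp hq).1
  have hKne : K.Nonempty := ⟨_, hq1nK⟩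
  set M := K.max' hKne with hM
  set K' := K.erase M with hK'
  have hK'sub : ∀ q ∈ K', q ∈ K := fun q hq => Finset.mem_of_mem_erase hq
  have hK'lt : ∀ q ∈ K', q < M := fun q hq =>
    lt_of_le_of_ne (K.le_max' q (hK'sub q hq)) (Finset.ne_of_mem_erase hq)
  have hnxtspec : ∀ q ∈ K', nxtHole K q ∈ K ∧ q < nxtHole K q ∧
      ∀ r ∈ K, q < r → nxtHole K q ≤ r := by
    intro q hq
    exact nxtHole_spec K q ⟨M, Finset.mem_filter.mpr ⟨K.max'_mem hKne, hK'lt q hq⟩⟩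
  have hpath : ∀ q ∈ K',
      InternalBorderPath n T₁ a b (stepIdx a (q+1)) (nxtHole K q - q - 1) := by
    intro q hq
    obtain ⟨hn1, hn2, hn3⟩ := hnxtspec q hq
    apply build_internal_path n T₁ a b q (nxtHole K q) hn2 (hKd _ hn1)
      ((hKmem q).mp (hK'sub q hq)).2 ((hKmem _).mp hn1).2
    intro r h1 h2
    by_contra hr
    exact absurd (hn3 r ((hKmem r).mpr ⟨lt_trans h2 (hKd _ hn1), hr⟩) h1) (by omega)
  -- the image sets of endpoint pairs
  set F : ℕ → Finset (Fin n × Fin n) := fun q =>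
    ((T₂.filter (fun e => ¬ IsBorderEdge e ∧
        ∃ t ≤ (nxtHole K q - q - 1), stepIdx (stepIdx a (q+1)) t ∈ e)).image
      (pickPair (stepIdx a (q+1)) (nxtHole K q - q - 1))) with hF
  have hgmem : ∀ q ∈ K', ∀ p ∈ F q,
      (s(p.1, p.2) ∈ T₂ ∧ ¬ IsBorderEdge s(p.1, p.2) ∧ p.1 ∈ sideOf a b ∧
        p.1 ≠ a ∧ p.1 ≠ b) ∧
      ∃ r, q < r ∧ r ≤ nxtHole K q ∧ p.1 = stepIdx a r := by
    intro q hq p hp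
    obtain ⟨hn1, hn2, hn3⟩ := hnxtspec q hq
    rw [hF] at hp
    obtain ⟨e, he, rfl⟩ := Finset.mem_image.mp hp
    rw [Finset.mem_filter] at he
    obtain ⟨heT, hnbe, hex⟩ := he
    obtain ⟨hspair, t, ht, hfst⟩ := pickPair_spec _ _ e hex
    have hfst' : (pickPair (stepIdx a (q+1)) (nxtHole K q - q - 1) e).1
        = stepIdx a (q+1+t) := by rw [hfst, stepIdx_add]
    have hrb : q+1+t < (b-a).val := by have := hKd _ hn1; omega
    obtain ⟨hmemA, hna, hnb⟩ := stepIdx_props a b (q+1+t) (by omega) hrb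
    rw [hspair]
    exact ⟨⟨heT, hnbe, by rw [hfst']; exact hmemA, by rw [hfst']; exact hna,
      by rw [hfst']; exact hnb⟩, q+1+t, by omega, by omega, hfst'⟩
  have hdisj : ∀ x ∈ K', ∀ y ∈ K', x ≠ y → Disjoint (F x) (F y) := by
    intro x hx y hy hxy
    rw [Finset.disjoint_left]
    intro p hpx hpy
    obtain ⟨-, r, hr1, hr2, hr3⟩ := hgmem x hx p hpx
    obtain ⟨-, r', hr1', hr2', hr3'⟩ := hgmem y hy p hpy
    have e1 := sub_val_stepIdx a r (by have := hKd _ (hnxtspec x hx).1; omega)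
    have e2 := sub_val_stepIdx a r' (by have := hKd _ (hnxtspec y hy).1; omega)
    rw [← hr3] at e1
    rw [← hr3'] at e2
    have hreq : r = r' := by omega
    rcases lt_trichotomy x y with h | h | h
    · have := (hnxtspec x hx).2.2 y (hK'sub y hy) h
      omega
    · exact hxy h
    · have := (hnxtspec y hy).2.2 x (hK'sub x hx) h
      omega
  have hsd_eq : sideDegree n a b T₂ = (Finset.univ.filter (fun p : Fin n × Fin n =>
      s(p.1, p.2) ∈ T₂ ∧ ¬ IsBorderEdge s(p.1, p.2) ∧ p.1 ∈ sideOf a b ∧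
      ((p.1 ≠ a ∧ p.1 ≠ b) ∨ p.2 ∈ sideOf a b))).card := rfl
  have hbound : ∑ q ∈ K', (F q).card ≤ sideDegree n a b T₂ := by
    rw [← Finset.card_biUnion hdisj, hsd_eq]
    apply Finset.card_le_card
    intro p hp
    rw [Finset.mem_biUnion] at hp
    obtain ⟨q, hq, hpq⟩ := hp
    obtain ⟨⟨h1, h2a, h3, h4, h5⟩, -⟩ := hgmem q hq p hpq
    exact Finset.mem_filter.mpr ⟨Finset.mem_univ _, h1, h2a, h3, Or.inl ⟨h4, h5⟩⟩
  have hFcard : ∀ q ∈ K',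
      incChords n T₂ (stepIdx a (q+1)) (nxtHole K q - q - 1) ≤ (F q).card := by
    intro q hq
    apply le_of_eq
    rw [hF]
    have hinj : Set.InjOn (pickPair (stepIdx a (q+1)) (nxtHole K q - q - 1))
        ↑(T₂.filter (fun e => ¬ IsBorderEdge e ∧
          ∃ t ≤ (nxtHole K q - q - 1), stepIdx (stepIdx a (q+1)) t ∈ e)) := by
      intro e he e' he' hee
      rw [Finset.mem_coe, Finset.mem_filter] at he he'
      have hsp := (pickPair_spec _ _ e he.2.2).1
      have hsp' := (pickPair_spec _ _ e' he'.2.2).1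
      rw [← hsp, ← hsp', hee]
    rw [Finset.card_image_of_injOn hinj]
    rfl
  -- putting everything together
  have hq1K' : ((i-a).val - 1) ∈ K' := Finset.mem_erase.mpr
    ⟨by have := K.le_max' _ hq1nK; omega, hq1K⟩
  have hq2K' : ((i'-a).val - 1) ∈ K' := Finset.mem_erase.mpr
    ⟨by have := K.le_max' _ hq2nK; omega, hq2K⟩
  have hq12 : ((i-a).val - 1) ≠ ((i'-a).val - 1) := by
    intro h
    apply hne
    rw [hi0, hi0', show (i-a).val = (i'-a).val from by omega]
  have hinc1 : 2 ≤ incChords n T₂ (stepIdx a (((i-a).val - 1)+1))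
      (nxtHole K ((i-a).val - 1) - ((i-a).val - 1) - 1) := by
    rw [hnxt1, show (i-a).val + m - ((i-a).val - 1) - 1 = m from by omega,
      show (i-a).val - 1 + 1 = (i-a).val from by omega, ← hi0]
    exact h2
  have hinc2 : 2 ≤ incChords n T₂ (stepIdx a (((i'-a).val - 1)+1))
      (nxtHole K ((i'-a).val - 1) - ((i'-a).val - 1) - 1) := by
    rw [hnxt1', show (i'-a).val + m' - ((i'-a).val - 1) - 1 = m' from by omega,
      show (i'-a).val - 1 + 1 = (i'-a).val from by omega, ← hi0']
    exact h2'
  have hq2K'' : ((i'-a).val - 1) ∈ K'.erase ((i-a).val - 1) :=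
    Finset.mem_erase.mpr ⟨fun h => hq12 h.symm, hq2K'⟩
  have e1 : ∑ q ∈ K', (F q).card
      = (F ((i-a).val - 1)).card + ∑ q ∈ K'.erase ((i-a).val - 1), (F q).card :=
    (Finset.add_sum_erase _ _ hq1K').symm
  have e2 : ∑ q ∈ K'.erase ((i-a).val - 1), (F q).card
      = (F ((i'-a).val - 1)).card
        + ∑ q ∈ (K'.erase ((i-a).val - 1)).erase ((i'-a).val - 1), (F q).card :=
    (Finset.add_sum_erase _ _ hq2K'').symm
  have e3 : ((K'.erase ((i-a).val - 1)).erase ((i'-a).val - 1)).card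
      ≤ ∑ q ∈ (K'.erase ((i-a).val - 1)).erase ((i'-a).val - 1), (F q).card := by
    rw [Finset.card_eq_sum_ones]
    apply Finset.sum_le_sum
    intro x hx
    have hxK' : x ∈ K' := Finset.mem_of_mem_erase (Finset.mem_of_mem_erase hx)
    exact le_trans (part1 _ _ (hpath x hxK')) (hFcard x hxK')
  have e4 : ((K'.erase ((i-a).val - 1)).erase ((i'-a).val - 1)).card = K'.card - 2 := by
    rw [Finset.card_erase_of_mem hq2K'', Finset.card_erase_of_mem hq1K']
    omega
  have e5 : K'.card = K.card - 1 := by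
    rw [hK', Finset.card_erase_of_mem (K.max'_mem hKne)]
  have e6 : 1 ≤ K.card := Finset.card_pos.mpr hKne
  have e7 : 2 ≤ (F ((i-a).val - 1)).card := le_trans hinc1 (hFcard _ hq1K')
  have e8 : 2 ≤ (F ((i'-a).val - 1)).card := le_trans hinc2 (hFcard _ hq2K')
  have e9 : 2 ≤ K'.card := by
    have := Finset.card_le_card (show {((i-a).val - 1), ((i'-a).val - 1)} ⊆ K' by
      intro x hx
      rcases Finset.mem_insert.mp hx with rfl | hx
      · exact hq1K'
      · rw [Finset.mem_singleton.mp hx]; exact hq2K')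
    rwa [Finset.card_insert_of_notMem (by simp [hq12]), Finset.card_singleton] at this
  -- number of holes equals K.card
  have hKholes : (holesIn n T₁ (sideOf a b)).card = K.card := by
    apply Finset.card_bij (fun x _ => (x - a).val)
    · intro x hx
      simp only [holesIn, Finset.mem_filter, Finset.mem_univ, true_and] at hx
      obtain ⟨hxe, hxA, hxnA⟩ := hx
      have hxd : (x - a).val ≤ (b-a).val := (mem_sideOf_iff a b x).mp hxA
      have hxd' : (x - a).val < (b-a).val := by
        rcases eq_or_lt_of_le hxd with he | h
        · exfalso
          have hxb : x = b := by rw [← stepIdx_sub_val a x, he, stepIdx_sub_val]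
          have hnxb : nextIdx x = stepIdx a ((b-a).val + 1) := by
            rw [stepIdx_succ, ← he, stepIdx_sub_val]
          by_cases hcase : (b-a).val + 1 < n
          · have hm := (mem_sideOf_iff a b _).mp hxnA
            rw [hnxb, sub_val_stepIdx a _ hcase] at hm
            omega
          · have hdn1 : (b-a).val + 1 = n := by omega
            have hnxa : nextIdx x = a := by rw [hnxb, hdn1, stepIdx_n]
            exact hvg.1.2.1 ⟨x, by rw [hnxa, hxb]; exact Sym2.eq_swap⟩
        · exact h
      rw [hKmem]
      refine ⟨hxd', ?_⟩
      have h1 : stepIdx a ((x-a).val) = x := stepIdx_sub_val a x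
      have h2 : stepIdx a ((x-a).val + 1) = nextIdx x := by rw [stepIdx_succ, h1]
      rw [h1, h2]
      exact hxe
    · intro x hx y hy hxy
      rw [← stepIdx_sub_val a x, hxy, stepIdx_sub_val a y]
    · intro q hq
      rw [hKmem] at hq
      refine ⟨stepIdx a q, ?_, sub_val_stepIdx a q (by omega)⟩
      simp only [holesIn, Finset.mem_filter, Finset.mem_univ, true_and]
      have hnx : nextIdx (stepIdx a q) = stepIdx a (q+1) := (stepIdx_succ a q).symm
      refine ⟨by rw [hnx]; exact hq.2, ?_, ?_⟩
      · rw [mem_sideOf_iff, sub_val_stepIdx a q (by omega)]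
        omega
      · rw [hnx, mem_sideOf_iff, sub_val_stepIdx a (q+1) (by omega)]
        omega
  have hfinal := hvg.2
  rw [hKholes] at hfinal
  omega
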